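/- Let m ≥ 3 and k ≥ 3 be integers, c ≥ 2 a real, C a finite set with |C| < m, and G a finite family of m-element sets each containing C. Suppose |G| > (e^c · k · √(ln m))^m and the number of pairs (T, U) ∈ G × G with T ∩ U ≠ C is less than 2 · (c²·k)^{-2} · |G|². Then there exist more than (1 − (c·k)^{-1}) · |G| sets T ∈ G — in particular more than (e^c · k)^m such sets — each satisfying: T ∩ U = C for more than (1 − (c·k)^{-1}) · |G| sets U ∈ G. -/

import Mathlib

set_option maxHeartbeats 2000000 in
/-- Most members of `G` meet most other members exactly in `C`.  If
`|G| > (e^c·k·√(ln m))^m` and fewer than `2·(c²·k)^{-2}·|G|²` ordered pairs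
`(T,U) ∈ G × G` have `T ∩ U ≠ C`, then more than `(1 − (c·k)⁻¹)·|G|` sets
`T ∈ G` — in particular more than `(e^c·k)^m` such sets — satisfy `ψ₄(T)`:
`T ∩ U = C` for more than `(1 − (c·k)⁻¹)·|G|` sets `U ∈ G`. -/
theorem psi4_many_sets {α : Type*} [DecidableEq α]
    (m k : ℕ) (hm : 3 ≤ m) (hk : 3 ≤ k) (c : ℝ) (hc : 2 ≤ c)
    (C : Finset α) (hC : C.card < m)
    (G : Finset (Finset α)) (hGcard : ∀ A ∈ G, A.card = m) (hGC : ∀ A ∈ G, C ⊆ A)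
    (hGbig : (Real.exp c * (k : ℝ) * Real.sqrt (Real.log m)) ^ m < (G.card : ℝ))
    (hpairs : (((G ×ˢ G).filter (fun p => p.1 ∩ p.2 ≠ C)).card : ℝ) <
      2 * ((c ^ 2 * (k : ℝ)) ^ 2)⁻¹ * (G.card : ℝ) ^ 2) :
    (1 - (c * (k : ℝ))⁻¹) * (G.card : ℝ) <
      ((G.filter (fun T => (1 - (c * (k : ℝ))⁻¹) * (G.card : ℝ) <
        ((G.filter (fun U => T ∩ U = C)).card : ℝ))).card : ℝ) ∧
    (Real.exp c * (k : ℝ)) ^ m <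
      ((G.filter (fun T => (1 - (c * (k : ℝ))⁻¹) * (G.card : ℝ) <
        ((G.filter (fun U => T ∩ U = C)).card : ℝ))).card : ℝ) := by
  classical
  have hk3 : (3:ℝ) ≤ (k:ℝ) := by exact_mod_cast hk
  have hm3 : (3:ℝ) ≤ (m:ℝ) := by exact_mod_cast hm
  have hcpos : (0:ℝ) < c := by linarith
  have hkpos : (0:ℝ) < (k:ℝ) := by linarith
  have hckpos : (0:ℝ) < c * k := by positivity
  -- log m ≥ 1.089
  have hlog2 : (0.6931471803:ℝ) < Real.log 2 := Real.log_two_gt_d9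
  have hlog3 : (1.089:ℝ) ≤ Real.log 3 := by
    have h7 : Real.log ((3:ℝ)^(7:ℕ)) = 7 * Real.log 3 := by
      rw [Real.log_pow]; push_cast; ring
    have h11 : Real.log ((2:ℝ)^(11:ℕ)) = 11 * Real.log 2 := by
      rw [Real.log_pow]; push_cast; ring
    have hle : Real.log ((2:ℝ)^(11:ℕ)) ≤ Real.log ((3:ℝ)^(7:ℕ)) :=
      Real.log_le_log (by norm_num) (by norm_num)
    rw [h7, h11] at hle
    nlinarith [hle, hlog2]
  have hlogm : (1.089:ℝ) ≤ Real.log m :=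
    hlog3.trans (Real.log_le_log (by norm_num) (by exact_mod_cast hm3))
  set s := Real.sqrt (Real.log m) with hs
  have hs2 : s ^ 2 = Real.log m := Real.sq_sqrt (by linarith)
  have hs0 : 0 ≤ s := Real.sqrt_nonneg _
  have hs1 : (1:ℝ) ≤ s := by nlinarith [hs2, hlogm, hs0]
  have hs104 : (1.04:ℝ) ≤ s := by nlinarith [hs2, hlogm, hs0]
  have hS : (12/11 : ℝ) ≤ s ^ m := by
    have h3 : s ^ 3 ≤ s ^ m := pow_le_pow_right₀ hs1 hm
    have : (12/11 : ℝ) ≤ s ^ 3 := by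
      have e : s ^ 3 = s * s ^ 2 := by ring
      rw [e, hs2]; nlinarith [hs104, hlogm]
    linarith
  have hek : (0:ℝ) < Real.exp c * k := by positivity
  have hekm : (0:ℝ) < (Real.exp c * k) ^ m := pow_pos hek m
  have hsm : (0:ℝ) < s ^ m := pow_pos (by linarith) m
  have hGbig' : (Real.exp c * k) ^ m * s ^ m < (G.card : ℝ) := by
    rw [← mul_pow]; exact hGbig
  have hnpos : (0:ℝ) < (G.card : ℝ) := lt_trans (mul_pos hekm hsm) hGbig'
  -- counting
  set bad := G.filter (fun T => ¬ ((1 - (c * (k : ℝ))⁻¹) * (G.card : ℝ) <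
        ((G.filter (fun U => T ∩ U = C)).card : ℝ))) with hbad
  set good := G.filter (fun T => (1 - (c * (k : ℝ))⁻¹) * (G.card : ℝ) <
        ((G.filter (fun U => T ∩ U = C)).card : ℝ)) with hgood
  have hsplit : good.card + bad.card = G.card :=
    Finset.card_filter_add_card_filter_not _
  have hsum : ((G ×ˢ G).filter (fun p => p.1 ∩ p.2 ≠ C)).card
      = ∑ T ∈ G, (G.filter (fun U => T ∩ U ≠ C)).card := by
    rw [Finset.card_filter, Finset.sum_product]
    simp [Finset.card_filter]
  have hlb : (bad.card : ℝ) * ((c*k)⁻¹ * G.card)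
      ≤ (((G ×ˢ G).filter (fun p => p.1 ∩ p.2 ≠ C)).card : ℝ) := by
    rw [hsum]
    push_cast
    calc (bad.card : ℝ) * ((c*k)⁻¹ * G.card)
        = ∑ _T ∈ bad, ((c*k)⁻¹ * G.card) := by
          rw [Finset.sum_const, nsmul_eq_mul]
      _ ≤ ∑ T ∈ bad, ((G.filter (fun U => T ∩ U ≠ C)).card : ℝ) := by
          apply Finset.sum_le_sum
          intro T hT
          rw [hbad, Finset.mem_filter] at hT
          obtain ⟨hTG, hTbad⟩ := hT
          push_neg at hTbad
          have hpart : (G.filter (fun U => T ∩ U = C)).card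
              + (G.filter (fun U => T ∩ U ≠ C)).card = G.card :=
            Finset.card_filter_add_card_filter_not _
          have hpart' : ((G.filter (fun U => T ∩ U = C)).card : ℝ)
              + ((G.filter (fun U => T ∩ U ≠ C)).card : ℝ) = (G.card : ℝ) := by
            exact_mod_cast hpart
          have : (1 - (c*(k:ℝ))⁻¹) * G.card + (c*(k:ℝ))⁻¹ * G.card = (G.card:ℝ) := by ring
          linarith
      _ ≤ ∑ T ∈ G, ((G.filter (fun U => T ∩ U ≠ C)).card : ℝ) := by
          apply Finset.sum_le_sum_of_subset_of_nonneg (Finset.filter_subset _ _)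
          intro i _ _
          positivity
  have hkey0 : (bad.card : ℝ) * ((c*k)⁻¹ * G.card) < 2 * ((c ^ 2 * (k : ℝ)) ^ 2)⁻¹ * (G.card : ℝ) ^ 2 :=
    lt_of_le_of_lt hlb hpairs
  have hcne : c ≠ 0 := ne_of_gt hcpos
  have hkne : (k:ℝ) ≠ 0 := ne_of_gt hkpos
  have hB0 : (0:ℝ) ≤ (bad.card : ℝ) := Nat.cast_nonneg _
  have hkey : (bad.card : ℝ) * (c^3 * k) < 2 * G.card := by
    have hpos : (0:ℝ) < (c*k)⁻¹ * G.card := by positivity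
    have heq : 2 * ((c ^ 2 * (k : ℝ)) ^ 2)⁻¹ * (G.card : ℝ) ^ 2
        = (2 * G.card / (c^3*k)) * ((c*k)⁻¹ * G.card) := by
      field_simp
    rw [heq] at hkey0
    have hB : (bad.card : ℝ) < 2 * G.card / (c^3*k) :=
      lt_of_mul_lt_mul_right hkey0 hpos.le
    rw [lt_div_iff₀ (by positivity)] at hB
    linarith
  -- part 1 ingredient : bad < (ck)⁻¹ * n
  have hbad1 : (bad.card : ℝ) < (c*k)⁻¹ * G.card := by
    rw [inv_mul_eq_div, lt_div_iff₀ hckpos]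
    have hc24 : (0:ℝ) ≤ c^2 - 4 := by nlinarith
    have h4 : (0:ℝ) ≤ (bad.card:ℝ) * (c*k) * (c^2-4) :=
      mul_nonneg (mul_nonneg hB0 hckpos.le) hc24
    nlinarith [hkey, h4, hnpos]
  -- part 2 ingredient : bad < n/12
  have hc8 : (8:ℝ) ≤ c^3 := by nlinarith [sq_nonneg (c-2), hc]
  have hc3k : (24:ℝ) ≤ c^3 * k := by
    calc (24:ℝ) = 8 * 3 := by norm_num
      _ ≤ c^3 * k := mul_le_mul hc8 hk3 (by norm_num) (by positivity)
  have hbad2 : (bad.card : ℝ) < (G.card : ℝ) / 12 := by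
    rw [lt_div_iff₀ (by norm_num : (0:ℝ) < 12)]
    nlinarith [hkey, mul_le_mul_of_nonneg_left hc3k hB0]
  have hg : (good.card : ℝ) = (G.card : ℝ) - (bad.card : ℝ) := by
    have := hsplit
    push_cast [← this]
    ring
  constructor
  · rw [hg]; linarith
  · rw [hg]
    have h12 : (Real.exp c * k) ^ m ≤ (11/12 : ℝ) * ((Real.exp c * k) ^ m * s ^ m) := by
      nlinarith [hekm, hS]
    nlinarith [hGbig', hbad2, hekm, hsm]
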